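/- Consider a register ℛ whose abstract value equals Z.val at all times, where Z.val changes at moves (to the pending installed value) and at imprints (an imprint with parameters (old, new) occurs only when Z.val = old and old ≠ new, and sets Z.val to new). Prove by induction on linearization times: after processing any prefix of the linearized operation sequence (reads return Z.val at their linearization point; trivial writes write the current value; hitchhiker+installer groups set the value to the installer's value; imprinting CAS(old,new) succeeds; CAS returning false at its linearization point has Z.val ≠ old there), the abstract register value always equals Z.val, and every returned response is consistent with the sequential specification of a CAS-register. -/

import Mathlib

set_option maxRecDepth 4000


/-- An operation on a CAS-register, together with its response. -/
inductive RegOp (V : Type*) : Type _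
  | read (resp : V) : RegOp V
  | write (v : V) : RegOp V
  | cas (old new : V) (resp : Bool) : RegOp V

/-- Sequential specification: whether the response of an operation is legal
when executed at register value `v`. -/
def legal {V : Type*} [DecidableEq V] (v : V) : RegOp V → Prop
  | .read r => r = v
  | .write _ => True
  | .cas old _ r => r = decide (v = old)

/-- Sequential specification: the register value after executing an operation
at register value `v`. -/
def next {V : Type*} [DecidableEq V] (v : V) : RegOp V → V
  | .read _ => v
  | .write w => w
  | .cas old new _ => if v = old then new else v

/-- The register value after sequentially executing a list of operations. -/
def regValue {V : Type*} [DecidableEq V] (v₀ : V) (l : List (RegOp V)) : V :=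
  l.foldl next v₀

/-- The per-event semantics of the linearized operations in terms of `Z.val`:
reads return `Z.val` at their linearization point; writes (trivial writes,
hitchhikers, and installers alike) set `Z.val` to their value; an imprinting
CAS requires `Z.val = old` and sets it to `new`; a CAS returning false has
`Z.val ≠ old` and leaves it unchanged. -/
def stepOK {V : Type*} [DecidableEq V] (zpre zpost : V) : RegOp V → Prop
  | .read r => r = zpre ∧ zpost = zpre
  | .write v => zpost = v
  | .cas old new r =>
      if r then zpre = old ∧ zpost = new else zpre ≠ old ∧ zpost = zpre

/-- If `Z.val` initially equals the register's initial value and evolves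
according to the per-event semantics of the linearized operations, then after
processing any prefix of the linearized sequence the abstract register value
equals `Z.val`, and every response is consistent with the sequential
specification of a CAS-register. -/
theorem stmt15 {V : Type*} [DecidableEq V] (v₀ : V) (ops : List (RegOp V))
    (zval : ℕ → V) (h0 : zval 0 = v₀)
    (hstep : ∀ n (hn : n < ops.length), stepOK (zval n) (zval (n + 1)) (ops.get ⟨n, hn⟩)) :
    (∀ n, n ≤ ops.length → zval n = regValue v₀ (ops.take n)) ∧
    (∀ n (hn : n < ops.length), legal (regValue v₀ (ops.take n)) (ops.get ⟨n, hn⟩)) := by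

  have key : ∀ n, n ≤ ops.length → zval n = regValue v₀ (ops.take n) := by
    intro n
    induction n with
    | zero => intro _; simpa [regValue] using h0
    | succ k ih =>
      intro hk
      have hk' : k < ops.length := Nat.lt_of_succ_le hk
      have ihk := ih (Nat.le_of_lt hk')
      have hs := hstep k hk'
      have htake : ops.take (k+1) = ops.take k ++ [ops.get ⟨k, hk'⟩] := by
        rw [← List.concat_eq_append]; exact (List.take_concat_get hk').symm
      have hnext : regValue v₀ (ops.take (k+1))
          = next (regValue v₀ (ops.take k)) (ops.get ⟨k, hk'⟩) := by
        rw [regValue, htake, List.foldl_append]; rfl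
      rw [hnext, ← ihk]
      cases hop : ops.get ⟨k, hk'⟩ with
      | read r => rw [hop] at hs; simp [next, stepOK, hs.2]
      | write v => rw [hop] at hs; simp only [stepOK] at hs; simp [next, hs]
      | cas old new r =>
        rw [hop] at hs
        cases r with
        | true => simp [stepOK] at hs; simp [next, hs.1, hs.2]
        | false => simp [stepOK] at hs; simp [next, hs.1, hs.2]
  refine ⟨key, ?_⟩
  intro n hn
  have hs := hstep n hn
  have hz := key n (Nat.le_of_lt hn)
  rw [← hz]
  cases hop : ops.get ⟨n, hn⟩ with
  | read r => rw [hop] at hs; simp [legal, hs.1]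
  | write v => simp [legal]
  | cas old new r =>
    rw [hop] at hs
    cases r with
    | true => simp [stepOK] at hs; simp [legal, hs.1]
    | false => simp [stepOK] at hs; simp [legal, hs.1]
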